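/- For every natural n ≥ 1, ln Γ(n) = n(ln n − 1) − (1/2) ln n + (1/2) ln(2π) + ∫₀^∞ [ (1 − p/2 − (p/2 + 1)e^{-p}) / (p²(e^{-p} − 1)) ] e^{-np} dp. -/

import Mathlib

open MeasureTheory Set Real Filter Topology

namespace Stmt10Aux

-- pointwise inequality lemmas
lemma aux1 {p : ℝ} (hp : 0 ≤ p) : (2 - p) * Real.exp p ≤ 2 + p := by
  have key : MonotoneOn (fun q : ℝ => 2 + q - (2 - q) * Real.exp q) (Ici 0) := by
    apply monotoneOn_of_deriv_nonneg (convex_Ici 0)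
    · fun_prop
    · fun_prop
    · intro x hx
      rw [interior_Ici] at hx
      have hd : HasDerivAt (fun q : ℝ => 2 + q - (2 - q) * Real.exp q)
          (1 - (1 - x) * Real.exp x) x := by
        have h1 : HasDerivAt (fun q : ℝ => 2 + q) 1 x :=
          (hasDerivAt_id x).const_add 2
        have h2 : HasDerivAt (fun q : ℝ => (2 - q) * Real.exp q)
            ((-1) * Real.exp x + (2 - x) * Real.exp x) x :=
          ((hasDerivAt_id x).const_sub 2).mul (Real.hasDerivAt_exp x)
        have := h1.fun_sub h2
        exact this.congr_deriv (by ring)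
      rw [hd.deriv]
      have h3 := Real.add_one_le_exp (-x)
      have h4 : Real.exp (-x) * Real.exp x = 1 := by
        rw [← Real.exp_add]; simp
      nlinarith [Real.exp_pos x]
  have h0 := key (self_mem_Ici) hp hp
  simp [Real.exp_zero] at h0
  nlinarith [h0]

lemma aux2 {p : ℝ} (hp : 0 ≤ p) : p^2 + p/2 + 1 ≤ (p^2 - p/2 + 1) * Real.exp p := by
  have key : MonotoneOn (fun q : ℝ => (q^2 - q/2 + 1) * Real.exp q - (q^2 + q/2 + 1)) (Ici 0) := by
    apply monotoneOn_of_deriv_nonneg (convex_Ici 0)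
    · fun_prop
    · fun_prop
    · intro x hx
      rw [interior_Ici] at hx
      have hd : HasDerivAt (fun q : ℝ => (q^2 - q/2 + 1) * Real.exp q - (q^2 + q/2 + 1))
          ((x^2 + 3*x/2 + 1/2) * Real.exp x - (2*x + 1/2)) x := by
        have h2 : HasDerivAt (fun q : ℝ => q^2 - q/2 + 1) (2*x - 1/2) x := by
          have := (((hasDerivAt_pow 2 x).sub ((hasDerivAt_id x).div_const 2)).add_const 1)
          exact this.congr_deriv (by ring)
        have h3 : HasDerivAt (fun q : ℝ => q^2 + q/2 + 1) (2*x + 1/2) x := by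
          have := (((hasDerivAt_pow 2 x).add ((hasDerivAt_id x).div_const 2)).add_const 1)
          exact this.congr_deriv (by ring)
        have := (h2.mul (Real.hasDerivAt_exp x)).sub h3
        exact this.congr_deriv (by ring)
      rw [hd.deriv]
      have h3 := Real.add_one_le_exp x
      nlinarith [Real.exp_pos x, (mem_Ioi.mp hx).le]
  have h0 := key (self_mem_Ici) hp hp
  simp [Real.exp_zero] at h0
  nlinarith [h0]

lemma num_nonpos {p : ℝ} (hp : 0 ≤ p) :
    1 - p / 2 - (p / 2 + 1) * Real.exp (-p) ≤ 0 := by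
  have h1 := aux1 hp
  have h4 : Real.exp (-p) * Real.exp p = 1 := by rw [← Real.exp_add]; simp
  nlinarith [Real.exp_pos (-p), Real.exp_pos p]

lemma num_ge {p : ℝ} (hp : 0 ≤ p) :
    p ^ 2 * (Real.exp (-p) - 1) ≤ 1 - p / 2 - (p / 2 + 1) * Real.exp (-p) := by
  have h1 := aux2 hp
  have h4 : Real.exp (-p) * Real.exp p = 1 := by rw [← Real.exp_add]; simp
  nlinarith [Real.exp_pos (-p), Real.exp_pos p]

noncomputable def f (p : ℝ) : ℝ :=
  (1 - p / 2 - (p / 2 + 1) * Real.exp (-p)) / (p ^ 2 * (Real.exp (-p) - 1))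

lemma denom_neg {p : ℝ} (hp : 0 < p) : p ^ 2 * (Real.exp (-p) - 1) < 0 := by
  have h1 : Real.exp (-p) < 1 := by
    rw [Real.exp_lt_one_iff]; linarith
  nlinarith [sq_nonneg p, pow_pos hp 2]

lemma f_nonneg {p : ℝ} (hp : 0 < p) : 0 ≤ f p := by
  rw [f, div_nonneg_iff]
  exact Or.inr ⟨num_nonpos hp.le, (denom_neg hp).le⟩

lemma f_le_one {p : ℝ} (hp : 0 < p) : f p ≤ 1 := by
  rw [f, div_le_one_iff]
  exact Or.inr (Or.inr ⟨denom_neg hp, num_ge hp.le⟩)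

lemma f_contOn : ContinuousOn f (Ioi 0) := by
  apply ContinuousOn.div
  · fun_prop
  · fun_prop
  · intro p hp
    exact (denom_neg hp).ne

lemma exp_rate_integrable {c : ℝ} (hc : 0 < c) :
    IntegrableOn (fun p : ℝ => Real.exp (-c * p)) (Ioi 0) := by
  simpa using exp_neg_integrableOn_Ioi 0 hc

lemma integrable_f_exp {c : ℝ} (hc : 0 < c) :
    IntegrableOn (fun p => f p * Real.exp (-c * p)) (Ioi 0) := by
  apply Integrable.mono' (exp_rate_integrable hc)
  · exact (f_contOn.mul (by fun_prop)).aestronglyMeasurable measurableSet_Ioi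
  · rw [ae_restrict_iff' measurableSet_Ioi]
    filter_upwards with p hp
    rw [norm_mul, Real.norm_eq_abs, Real.norm_eq_abs,
      abs_of_nonneg (f_nonneg hp), abs_of_nonneg (Real.exp_pos _).le]
    nlinarith [f_le_one hp, Real.exp_pos (-c * p), f_nonneg hp]

lemma integral_exp_rate {c : ℝ} (hc : 0 < c) :
    ∫ p in Ioi (0:ℝ), Real.exp (-c * p) = 1 / c := by
  have hderiv : ∀ x ∈ Ici (0:ℝ), HasDerivAt (fun p => -Real.exp (-c * p) / c)
      (Real.exp (-c * x)) x := by
    intro x _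
    have h : HasDerivAt (fun p : ℝ => Real.exp (-c * p)) (-c * Real.exp (-c * x)) x := by
      have := ((hasDerivAt_id x).const_mul (-c)).exp
      simpa [mul_comm] using this
    have h5 := (h.div_const c).fun_neg
    have h2 : -(-c * Real.exp (-c*x)/c) = Real.exp (-c*x) := by field_simp
    simpa [neg_div, h2, mul_div_cancel_left₀, hc.ne'] using h5
  have htop : Tendsto (fun p => -Real.exp (-c * p) / c) atTop (𝓝 0) := by
    have h1 : Tendsto (fun p : ℝ => Real.exp (-c * p)) atTop (𝓝 0) := by
      have h2 : Tendsto (fun p : ℝ => c * p) atTop atTop :=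
        Tendsto.const_mul_atTop hc tendsto_id
      rw [show (fun p:ℝ => Real.exp (-c*p)) = (fun x => Real.exp (-x)) ∘ (fun p => c*p) by
        ext p; rw [Function.comp_apply, neg_mul]]
      exact Real.tendsto_exp_neg_atTop_nhds_zero.comp h2
    simpa using (h1.neg).div_const c
  have := integral_Ioi_of_hasDerivAt_of_tendsto' hderiv (exp_rate_integrable hc) htop
  rw [this]
  norm_num
  field_simp

lemma frullani_bound {a b p : ℝ} (ha : 0 < a) (hab : a ≤ b) (hp : 0 < p) :
    (Real.exp (-a*p) - Real.exp (-b*p))/p ≤ (b-a) * Real.exp (-a*p) := by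
  rw [div_le_iff₀ hp]
  have h1 : Real.exp (-b*p) = Real.exp (-a*p) * Real.exp (-(b-a)*p) := by
    rw [← Real.exp_add]; ring_nf
  have h2 : 1 - (b-a)*p ≤ Real.exp (-(b-a)*p) := by
    have := Real.add_one_le_exp (-(b-a)*p); linarith
  nlinarith [Real.exp_pos (-a*p)]

lemma frullani_nonneg {a b p : ℝ} (hab : a ≤ b) (hp : 0 < p) :
    0 ≤ (Real.exp (-a*p) - Real.exp (-b*p))/p := by
  apply div_nonneg _ hp.le
  have : Real.exp (-b*p) ≤ Real.exp (-a*p) := by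
    apply Real.exp_le_exp.2; nlinarith
  linarith

lemma frullani_integrable {a b : ℝ} (ha : 0 < a) (hab : a ≤ b) :
    IntegrableOn (fun p => (Real.exp (-a*p) - Real.exp (-b*p))/p) (Ioi 0) := by
  apply Integrable.mono' ((exp_rate_integrable ha).const_mul (b-a))
  · apply ContinuousOn.aestronglyMeasurable _ measurableSet_Ioi
    apply ContinuousOn.div (by fun_prop) (by fun_prop)
    intro p hp; exact ne_of_gt hp
  · rw [ae_restrict_iff' measurableSet_Ioi]
    filter_upwards with p hp
    rw [Real.norm_eq_abs, abs_of_nonneg (frullani_nonneg hab hp)]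
    exact frullani_bound ha hab hp

lemma inner_t {a b p : ℝ} (hab : a ≤ b) (hp : 0 < p) :
    ∫ t in Ioc a b, Real.exp (-t * p) = (Real.exp (-a*p) - Real.exp (-b*p)) / p := by
  rw [← intervalIntegral.integral_of_le hab]
  have hd : ∀ t ∈ uIcc a b, HasDerivAt (fun s => -Real.exp (-s*p)/p) (Real.exp (-t*p)) t := by
    intro t _
    have h : HasDerivAt (fun s : ℝ => Real.exp (-s*p)) (Real.exp (-t*p) * (-p)) t := by
      have h0 : HasDerivAt (fun s : ℝ => -s*p) (-p) t := by
        simpa [neg_mul, id_eq] using ((hasDerivAt_id t).mul_const p).fun_neg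
      exact h0.exp
    have h5 := (h.div_const p).fun_neg
    have heq : -(Real.exp (-t*p) * -p / p) = Real.exp (-t*p) := by
      field_simp
    rw [← heq]
    simpa [neg_div] using h5
  rw [intervalIntegral.integral_eq_sub_of_hasDerivAt hd
    ((Continuous.intervalIntegrable (by fun_prop) a b))]
  field_simp
  ring

lemma frullani {a b : ℝ} (ha : 0 < a) (hab : a ≤ b) :
    ∫ p in Ioi (0:ℝ), (Real.exp (-a*p) - Real.exp (-b*p))/p = Real.log b - Real.log a := by
  have hb : 0 < b := lt_of_lt_of_le ha hab
  have hunc : (Function.uncurry fun p t => Real.exp (-t*p))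
      = fun q : ℝ × ℝ => Real.exp (-q.2 * q.1) := rfl
  have hFc : Continuous (Function.uncurry fun p t => Real.exp (-t*p)) := by
    rw [hunc]; fun_prop
  have hFm : AEStronglyMeasurable (Function.uncurry fun p t => Real.exp (-t*p))
      ((volume.restrict (Ioi (0:ℝ))).prod (volume.restrict (Ioc a b))) :=
    hFc.aestronglyMeasurable
  have hbound : ∀ p : ℝ, 0 < p → ∫ t in Ioc a b, Real.exp (-t*p) ≤ (b-a) * Real.exp (-a*p) := by
    intro p hp
    calc ∫ t in Ioc a b, Real.exp (-t*p)
        ≤ ∫ _t in Ioc a b, Real.exp (-a*p) := by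
          apply setIntegral_mono_on (Continuous.integrableOn_Ioc (by fun_prop))
            (integrableOn_const measure_Ioc_lt_top.ne) measurableSet_Ioc
          intro t ht
          apply Real.exp_le_exp.2
          nlinarith [ht.1]
      _ = (b-a) * Real.exp (-a*p) := by
          rw [setIntegral_const, Real.volume_real_Ioc_of_le hab, smul_eq_mul]
  have hInt : Integrable (Function.uncurry fun p t => Real.exp (-t*p))
      ((volume.restrict (Ioi (0:ℝ))).prod (volume.restrict (Ioc a b))) := by
    rw [integrable_prod_iff hFm]
    constructor
    · exact ae_of_all _ fun p => Continuous.integrableOn_Ioc (by fun_prop)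
    · apply Integrable.mono' ((exp_rate_integrable ha).const_mul (b-a))
      · exact hFm.norm.integral_prod_right'
      · rw [ae_restrict_iff' measurableSet_Ioi]
        filter_upwards with p hp
        have h1 : ∀ t : ℝ, ‖Real.exp (-t*p)‖ = Real.exp (-t*p) :=
          fun t => norm_of_nonneg (Real.exp_pos _).le
        rw [Real.norm_eq_abs, abs_of_nonneg (integral_nonneg fun t => norm_nonneg _)]
        simp only [Function.uncurry_apply_pair, h1]
        exact hbound p hp
  have swap := integral_integral_swap hInt
  have hL : ∫ p in Ioi (0:ℝ), (∫ t in Ioc a b, Real.exp (-t*p))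
      = ∫ p in Ioi (0:ℝ), (Real.exp (-a*p) - Real.exp (-b*p))/p := by
    apply setIntegral_congr_fun measurableSet_Ioi
    intro p hp
    exact inner_t hab hp
  have hR : ∫ t in Ioc a b, (∫ p in Ioi (0:ℝ), Real.exp (-t*p))
      = ∫ t in Ioc a b, 1/t := by
    apply setIntegral_congr_fun measurableSet_Ioc
    intro t ht
    exact integral_exp_rate (lt_of_lt_of_le ha ht.1.le)
  have hlog : ∫ t in Ioc a b, 1/t = Real.log b - Real.log a := by
    rw [← intervalIntegral.integral_of_le hab, integral_one_div
      (notMem_uIcc_of_lt ha (lt_of_lt_of_le ha hab)), Real.log_div hb.ne' ha.ne']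
  rw [← hL, swap, hR, hlog]

lemma tendsto_exp_rate {c : ℝ} (hc : 0 < c) :
    Tendsto (fun p : ℝ => Real.exp (-c * p)) atTop (𝓝 0) := by
  rw [show (fun p:ℝ => Real.exp (-c*p)) = (fun x => Real.exp (-x)) ∘ (fun p => c*p) by
    ext p; rw [Function.comp_apply, neg_mul]]
  exact Real.tendsto_exp_neg_atTop_nhds_zero.comp (Tendsto.const_mul_atTop hc tendsto_id)

lemma integrable_M {a : ℝ} (ha : 0 < a) :
    IntegrableOn (fun p => (1 - p/2 - (p/2+1)*Real.exp (-p))/p^2 * Real.exp (-a*p))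
      (Ioi 0) := by
  apply Integrable.mono' (exp_rate_integrable ha)
  · apply ContinuousOn.aestronglyMeasurable _ measurableSet_Ioi
    apply ContinuousOn.mul _ (by fun_prop)
    apply ContinuousOn.div (by fun_prop) (by fun_prop)
    intro p hp
    exact pow_ne_zero 2 (ne_of_gt hp)
  · rw [ae_restrict_iff' measurableSet_Ioi]
    filter_upwards with p hp
    have hp2 : (0:ℝ) < p^2 := pow_pos hp 2
    have h1 : |1 - p/2 - (p/2+1)*Real.exp (-p)| ≤ p^2 := by
      rw [abs_of_nonpos (num_nonpos hp.le)]
      nlinarith [num_ge hp.le, Real.exp_pos (-p)]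
    rw [norm_mul, Real.norm_eq_abs, Real.norm_eq_abs, abs_div, abs_of_pos hp2,
      abs_of_pos (Real.exp_pos _)]
    calc |1 - p/2 - (p/2+1)*Real.exp (-p)| / p^2 * Real.exp (-a*p)
        ≤ 1 * Real.exp (-a*p) := by
          apply mul_le_mul_of_nonneg_right _ (Real.exp_pos _).le
          rw [div_le_one hp2]; exact h1
      _ = Real.exp (-a*p) := one_mul _

lemma key_identity {a : ℝ} (ha : 0 < a) :
    ∫ p in Ioi (0:ℝ), (1 - p/2 - (p/2+1)*Real.exp (-p))/p^2 * Real.exp (-a*p)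
      = 1 - (a + 1/2) * (Real.log (a+1) - Real.log a) := by
  set W : ℝ → ℝ := fun p =>
    if p = 0 then -1 else (Real.exp (-(a+1)*p) - Real.exp (-a*p))/p with hWdef
  set W' : ℝ → ℝ := fun p =>
    (a*Real.exp (-a*p) - (a+1)*Real.exp (-(a+1)*p))/p
      + (Real.exp (-a*p) - Real.exp (-(a+1)*p))/p^2 with hW'def
  have halg : ∀ p ∈ Ioi (0:ℝ),
      (1 - p/2 - (p/2+1)*Real.exp (-p))/p^2 * Real.exp (-a*p)
        = W' p - (a + 1/2) * ((Real.exp (-a*p) - Real.exp (-(a+1)*p))/p) := by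
    intro p hp
    have hp0 : (p:ℝ) ≠ 0 := ne_of_gt hp
    have e1 : Real.exp (-(a+1)*p) = Real.exp (-a*p) * Real.exp (-p) := by
      rw [← Real.exp_add]; congr 1; ring
    rw [hW'def]
    simp only [e1]
    field_simp
    ring
  have hM := integrable_M ha
  have hFr := frullani_integrable ha (by linarith : a ≤ a + 1)
  have hW'int : IntegrableOn W' (Ioi 0) := by
    apply IntegrableOn.congr_fun (hM.add (hFr.const_mul (a + 1/2))) _ measurableSet_Ioi
    intro p hp
    simp only [Pi.add_apply]
    linarith [halg p hp]
  have hderiv : ∀ x ∈ Ioi (0:ℝ), HasDerivAt W (W' x) x := by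
    intro x hx
    have hx0 : x ≠ 0 := ne_of_gt hx
    have hu : HasDerivAt (fun p : ℝ => Real.exp (-(a+1)*p) - Real.exp (-a*p))
        (-(a+1)*Real.exp (-(a+1)*x) - (-a)*Real.exp (-a*x)) x := by
      have h1 : HasDerivAt (fun p : ℝ => Real.exp (-(a+1)*p)) (-(a+1)*Real.exp (-(a+1)*x)) x := by
        have h0 : HasDerivAt (fun p : ℝ => -(a+1)*p) (-(a+1)) x := by
          simpa using HasDerivAt.const_mul (-(a+1)) (hasDerivAt_id x)
        simpa [mul_comm] using h0.exp
      have h2 : HasDerivAt (fun p : ℝ => Real.exp (-a*p)) (-a*Real.exp (-a*x)) x := by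
        have h0 : HasDerivAt (fun p : ℝ => -a*p) (-a) x := by
          simpa using HasDerivAt.const_mul (-a) (hasDerivAt_id x)
        simpa [mul_comm] using h0.exp
      simpa using h1.fun_sub h2
    have hform : HasDerivAt (fun p => (Real.exp (-(a+1)*p) - Real.exp (-a*p))/p) (W' x) x := by
      have := hu.fun_div (hasDerivAt_id x) hx0
      refine this.congr_deriv ?_
      simp only [id]
      rw [hW'def]
      field_simp
      ring
    apply hform.congr_of_eventuallyEq
    filter_upwards [eventually_ne_nhds hx0] with p hp
    rw [hWdef]
    simp only [if_neg hp]
  have hcont : ContinuousWithinAt W (Ici 0) 0 := by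
    have hu0 : HasDerivAt (fun p : ℝ => Real.exp (-(a+1)*p) - Real.exp (-a*p)) (-1) 0 := by
      have h1 : HasDerivAt (fun p : ℝ => Real.exp (-(a+1)*p)) (-(a+1)*Real.exp (-(a+1)*(0:ℝ))) 0 := by
        have h0 : HasDerivAt (fun p : ℝ => -(a+1)*p) (-(a+1)) (0:ℝ) := by
          simpa using HasDerivAt.const_mul (-(a+1)) (hasDerivAt_id (0:ℝ))
        simpa [mul_comm] using h0.exp
      have h2 : HasDerivAt (fun p : ℝ => Real.exp (-a*p)) (-a*Real.exp (-a*(0:ℝ))) 0 := by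
        have h0 : HasDerivAt (fun p : ℝ => -a*p) (-a) (0:ℝ) := by
          simpa using HasDerivAt.const_mul (-a) (hasDerivAt_id (0:ℝ))
        simpa [mul_comm] using h0.exp
      refine (h1.fun_sub h2).congr_deriv ?_
      norm_num
    have key : Tendsto W (𝓝[≠] (0:ℝ)) (𝓝 (-1)) := by
      apply Tendsto.congr' _ (hasDerivAt_iff_tendsto_slope.mp hu0)
      filter_upwards [self_mem_nhdsWithin] with p hp
      have hp' : p ≠ 0 := hp
      rw [slope_def_field, hWdef]
      simp only [if_neg hp']
      norm_num
    have h2 : Tendsto W (𝓝[Ioi 0] (0:ℝ)) (𝓝 (-1)) :=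
      key.mono_left (nhdsWithin_mono 0 (fun p hp => ne_of_gt hp))
    have h3 : ContinuousWithinAt W (Ioi 0) 0 := by
      have hW0 : W 0 = -1 := by rw [hWdef]; simp
      rw [ContinuousWithinAt, hW0]
      exact h2
    rw [show Ici (0:ℝ) = insert 0 (Ioi 0) from Ioi_insert.symm]
    exact h3.insert
  have htop : Tendsto W atTop (𝓝 0) := by
    have h1 : Tendsto (fun p : ℝ => (Real.exp (-(a+1)*p) - Real.exp (-a*p)) * p⁻¹)
        atTop (𝓝 0) := by
      have := ((tendsto_exp_rate (by linarith : (0:ℝ) < a+1)).sub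
        (tendsto_exp_rate ha)).mul tendsto_inv_atTop_zero
      simpa using this
    apply Tendsto.congr' _ h1
    filter_upwards [Ioi_mem_atTop 0] with p hp
    rw [hWdef]
    simp only [if_neg (ne_of_gt (mem_Ioi.mp hp))]
    rw [div_eq_mul_inv]
  have hmain := integral_Ioi_of_hasDerivAt_of_tendsto hcont hderiv hW'int htop
  have hW0 : W 0 = -1 := by rw [hWdef]; simp
  rw [hW0] at hmain
  have hsplit : ∫ p in Ioi (0:ℝ), (1 - p/2 - (p/2+1)*Real.exp (-p))/p^2 * Real.exp (-a*p)
      = ∫ p in Ioi (0:ℝ),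
        (W' p - (a + 1/2) * ((Real.exp (-a*p) - Real.exp (-(a+1)*p))/p)) := by
    exact setIntegral_congr_fun measurableSet_Ioi halg
  rw [hsplit, integral_sub hW'int (hFr.const_mul _), integral_const_mul, hmain,
    frullani ha (by linarith : a ≤ a + 1)]
  ring


noncomputable def I (c : ℝ) : ℝ := ∫ p in Ioi (0:ℝ), f p * Real.exp (-c * p)

noncomputable def A (x : ℝ) : ℝ :=
  x * (Real.log x - 1) - (1 / 2) * Real.log x + (1 / 2) * Real.log (2 * π)

lemma I_rec {a : ℝ} (ha : 0 < a) :
    I a - I (a+1) = (a + 1/2) * (Real.log (a+1) - Real.log a) - 1 := by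
  have h1 := integrable_f_exp ha
  have h2 := integrable_f_exp (show (0:ℝ) < a+1 by linarith)
  rw [I, I, ← integral_sub h1 h2]
  have hcong : EqOn (fun p => f p * Real.exp (-a*p) - f p * Real.exp (-(a+1)*p))
      (fun p => -((1 - p/2 - (p/2+1)*Real.exp (-p))/p^2 * Real.exp (-a*p))) (Ioi 0) := by
    intro p hp
    have hp0 : (p:ℝ) ≠ 0 := ne_of_gt hp
    have hy : Real.exp (-p) - 1 ≠ 0 := by
      have h3 : Real.exp (-p) < 1 := by rw [Real.exp_lt_one_iff]; linarith [hp.out]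
      linarith
    have e1 : Real.exp (-(a+1)*p) = Real.exp (-a*p) * Real.exp (-p) := by
      rw [← Real.exp_add]; congr 1; ring
    simp only [f, e1]
    field_simp
    ring
  rw [setIntegral_congr_fun measurableSet_Ioi hcong, integral_neg, key_identity ha]
  ring

lemma I_tendsto : Tendsto (fun m : ℕ => I ((m+1 : ℕ) : ℝ)) atTop (𝓝 0) := by
  refine squeeze_zero_norm (a := fun m : ℕ => 1 / ((m : ℝ) + 1)) ?_ ?_
  · intro m
    have hm : (0:ℝ) < ((m+1 : ℕ) : ℝ) := by positivity
    have hb : ∫ p in Ioi (0:ℝ), ‖f p * Real.exp (-((m+1:ℕ):ℝ) * p)‖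
        ≤ ∫ p in Ioi (0:ℝ), Real.exp (-((m+1:ℕ):ℝ) * p) := by
      apply setIntegral_mono_on (integrable_f_exp hm).norm (exp_rate_integrable hm)
        measurableSet_Ioi
      intro p hp
      rw [norm_mul, Real.norm_eq_abs, Real.norm_eq_abs, abs_of_nonneg (f_nonneg hp),
        abs_of_nonneg (Real.exp_pos _).le]
      nlinarith [f_le_one hp, f_nonneg hp, Real.exp_pos (-((m+1:ℕ):ℝ) * p)]
    calc ‖I ((m+1:ℕ):ℝ)‖ ≤ ∫ p in Ioi (0:ℝ), ‖f p * Real.exp (-((m+1:ℕ):ℝ) * p)‖ :=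
          norm_integral_le_integral_norm _
      _ ≤ ∫ p in Ioi (0:ℝ), Real.exp (-((m+1:ℕ):ℝ) * p) := hb
      _ = 1 / ((m:ℝ) + 1) := by rw [integral_exp_rate hm]; push_cast; ring
  · exact tendsto_one_div_add_atTop_nhds_zero_nat

lemma d_eq (m : ℕ) :
    Real.log (Real.Gamma ((m+1 : ℕ) : ℝ)) - A ((m+1 : ℕ) : ℝ)
      = Real.log (Stirling.stirlingSeq (m+1)) - (1/2) * Real.log π := by
  have hn : (0:ℝ) < ((m+1 : ℕ) : ℝ) := by positivity
  have hfac : Real.Gamma ((m+1 : ℕ) : ℝ) = (Nat.factorial m) := by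
    push_cast
    exact_mod_cast Real.Gamma_nat_eq_factorial m
  have hls := Stirling.log_stirlingSeq_formula (m+1)
  have hfacsucc : ((Nat.factorial (m+1)) : ℝ) = ((m+1 : ℕ) : ℝ) * (Nat.factorial m) := by
    push_cast [Nat.factorial_succ]; ring
  have hlog_fs : Real.log ((Nat.factorial (m+1)) : ℝ) = Real.log ((m+1:ℕ):ℝ) + Real.log ((Nat.factorial m) : ℝ) := by
    rw [hfacsucc, Real.log_mul (by positivity) (by positivity)]
  have hlog2n : Real.log (2 * ((m+1:ℕ):ℝ)) = Real.log 2 + Real.log ((m+1:ℕ):ℝ) :=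
    Real.log_mul two_ne_zero (by positivity)
  have hlogdiv : Real.log (((m+1:ℕ):ℝ) / Real.exp 1) = Real.log ((m+1:ℕ):ℝ) - 1 := by
    rw [Real.log_div (by positivity) (Real.exp_ne_zero 1), Real.log_exp]
  have hlog2pi : Real.log (2 * π) = Real.log 2 + Real.log π :=
    Real.log_mul two_ne_zero pi_ne_zero
  rw [A, hfac, hlog2pi]
  rw [hlog2n, hlogdiv] at hls
  have : Real.log ((Nat.factorial m) : ℝ) = Real.log ((Nat.factorial (m+1)) : ℝ) - Real.log ((m+1:ℕ):ℝ) := by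
    rw [hlog_fs]; ring
  rw [this]
  push_cast at hls ⊢
  linarith [hls]

lemma stirling_tendsto :
    Tendsto (fun m : ℕ => Real.log (Stirling.stirlingSeq (m+1))) atTop
      (𝓝 ((1/2) * Real.log π)) := by
  have h1 : Tendsto (fun m : ℕ => Stirling.stirlingSeq (m+1)) atTop (𝓝 (√π)) :=
    Stirling.tendsto_stirlingSeq_sqrt_pi.comp (by simpa using tendsto_add_atTop_nat 1)
  have h2 : ContinuousAt Real.log (√π) := Real.continuousAt_log (by positivity)
  have := h2.tendsto.comp h1
  have hsq : Real.log (√π) = (1/2) * Real.log π := by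
    rw [Real.log_sqrt pi_pos.le]; ring
  rwa [Function.comp_def, hsq] at this


noncomputable def D (k : ℕ) : ℝ := Real.log (Real.Gamma (k : ℝ)) - A (k : ℝ) - I (k : ℝ)

lemma hstep {k : ℕ} (hk : 1 ≤ k) : D (k+1) = D k := by
  have hk0 : (0:ℝ) < (k:ℝ) := by exact_mod_cast hk
  have hcast : ((k+1 : ℕ) : ℝ) = (k:ℝ) + 1 := by push_cast; ring
  have hGamma : Real.log (Real.Gamma ((k:ℝ)+1)) = Real.log (k:ℝ) + Real.log (Real.Gamma (k:ℝ)) := by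
    rw [Real.Gamma_add_one hk0.ne', Real.log_mul hk0.ne' (Real.Gamma_pos_of_pos hk0).ne']
  have hrec := I_rec hk0
  rw [D, D, hcast, hGamma, A, A]
  ring_nf
  ring_nf at hrec
  linarith [hrec]

lemma D_tendsto : Tendsto (fun m : ℕ => D (m+1)) atTop (𝓝 0) := by
  have h1 : Tendsto (fun m : ℕ =>
      (Real.log (Stirling.stirlingSeq (m+1)) - I ((m+1:ℕ):ℝ)) - (1/2)*Real.log π) atTop
      (𝓝 ((1/2)*Real.log π - 0 - (1/2)*Real.log π)) :=
    (stirling_tendsto.sub I_tendsto).sub tendsto_const_nhds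
  rw [show ((1:ℝ)/2*Real.log π - 0 - (1/2)*Real.log π) = 0 by ring] at h1
  apply h1.congr
  intro m
  have hd := d_eq m
  rw [D]
  linarith [hd]

lemma D_eq_zero {n : ℕ} (hn : 1 ≤ n) : D n = 0 := by
  have hconst : ∀ m : ℕ, D (n + m) = D n := by
    intro m
    induction m with
    | zero => rfl
    | succ m ih =>
      rw [show n + (m+1) = (n+m) + 1 from rfl, hstep (le_trans hn (Nat.le_add_right n m)), ih]
  have h2 : Tendsto (fun m : ℕ => D ((m + n) + 1)) atTop (𝓝 0) :=
    D_tendsto.comp (tendsto_add_atTop_nat n)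
  have h3 : Tendsto (fun _ : ℕ => D n) atTop (𝓝 0) := by
    apply h2.congr
    intro m
    rw [show (m + n) + 1 = n + (m + 1) by omega, hconst (m+1)]
  exact tendsto_nhds_unique tendsto_const_nhds h3

end Stmt10Aux

open Stmt10Aux in
theorem stmt10 (n : ℕ) (hn : 1 ≤ n) :
    Real.log (Real.Gamma n) =
      n * (Real.log n - 1) - (1 / 2) * Real.log n + (1 / 2) * Real.log (2 * π) +
        ∫ p in Ioi (0 : ℝ),
          (1 - p / 2 - (p / 2 + 1) * Real.exp (-p)) / (p ^ 2 * (Real.exp (-p) - 1)) *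
            Real.exp (-(n : ℝ) * p) := by
  have h := D_eq_zero hn
  rw [D, A, I] at h
  have : (∫ p in Ioi (0:ℝ),
      (1 - p / 2 - (p / 2 + 1) * Real.exp (-p)) / (p ^ 2 * (Real.exp (-p) - 1)) *
        Real.exp (-(n : ℝ) * p)) = ∫ p in Ioi (0:ℝ), f p * Real.exp (-(n:ℝ) * p) := rfl
  rw [this]
  linarith [h]
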